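/- Let W_z be an m_z×m_z real symmetric positive definite matrix and S_z an m_z×r real matrix with full column rank. Then tr(S_z(S_zᵀW_z⁻¹S_z)⁻¹S_zᵀ) ≤ tr(W_z), and moreover every diagonal entry satisfies (S_z(S_zᵀW_z⁻¹S_z)⁻¹S_zᵀ)_{ii} ≤ (W_z)_{ii} for all 1 ≤ i ≤ m_z. In particular, minT reconciliation on the pruned hierarchy improves (does not worsen) the forecast error variance at every node, and hence at every level of the temporal hierarchy. -/

import Mathlib

open Matrix

private lemma psd_diag_nonneg {n : ℕ} {M : Matrix (Fin n) (Fin n) ℝ}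
    (hM : M.PosSemidef) (i : Fin n) : 0 ≤ M i i := by
  simpa [dotProduct, mulVec, Pi.single_apply, Finset.sum_ite_eq] using hM.dotProduct_mulVec_nonneg (Pi.single i 1)

/-- On the pruned hierarchy with m_z nodes, minT reconciliation improves the
trace of the forecast error covariance and every diagonal entry (forecast error
variance at every node). -/
theorem pruned_minT_improves_trace_and_variances {mz r : ℕ}
    (Wz : Matrix (Fin mz) (Fin mz) ℝ) (Sz : Matrix (Fin mz) (Fin r) ℝ)
    (hW : Wz.PosDef) (hS : Sz.rank = r) :
    (Sz * (Szᵀ * Wz⁻¹ * Sz)⁻¹ * Szᵀ).trace ≤ Wz.trace ∧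
      ∀ i : Fin mz, (Sz * (Szᵀ * Wz⁻¹ * Sz)⁻¹ * Szᵀ) i i ≤ Wz i i := by
  -- injectivity of mulVec Sz from full column rank
  have hinj : Function.Injective Sz.mulVec := by
    have h1 : LinearMap.ker Sz.mulVecLin = ⊥ := by
      have h2 := Sz.mulVecLin.finrank_range_add_finrank_ker
      rw [show Module.finrank ℝ (LinearMap.range Sz.mulVecLin) = r from hS,
        Module.finrank_pi, Fintype.card_fin] at h2
      exact Submodule.finrank_eq_zero.mp (by omega)
    exact fun x y hxy => LinearMap.ker_eq_bot.mp h1 hxy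
  set A : Matrix (Fin r) (Fin r) ℝ := Szᵀ * Wz⁻¹ * Sz with hAdef
  have hApd : A.PosDef := by
    rw [hAdef, ← conjTranspose_eq_transpose_of_trivial]
    refine posDef_iff_dotProduct_mulVec.mpr ⟨isHermitian_conjTranspose_mul_mul _ hW.inv.isHermitian, fun x hx => ?_⟩
    have hSx : Sz *ᵥ x ≠ 0 := fun h => hx (hinj (by simpa using h))
    simpa [dotProduct_mulVec, ← vecMul_vecMul, vecMul_transpose] using hW.inv.dotProduct_mulVec_pos hSx
  -- basic inverse identities
  have hWdet : IsUnit Wz.det := (isUnit_iff_isUnit_det _).mp hW.isUnit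
  have hAdet : IsUnit A.det := (isUnit_iff_isUnit_det _).mp hApd.isUnit
  have hWl : Wz⁻¹ * Wz = 1 := nonsing_inv_mul _ hWdet
  have hWr : Wz * Wz⁻¹ = 1 := mul_nonsing_inv _ hWdet
  have hAl : A⁻¹ * A = 1 := nonsing_inv_mul _ hAdet
  have hWit : Wz⁻¹ᵀ = Wz⁻¹ := by
    rw [← conjTranspose_eq_transpose_of_trivial]; exact hW.inv.isHermitian.eq
  have hAit : A⁻¹ᵀ = A⁻¹ := by
    rw [← conjTranspose_eq_transpose_of_trivial]; exact hApd.inv.isHermitian.eq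
  set X : Matrix (Fin mz) (Fin mz) ℝ := Sz * A⁻¹ * Szᵀ with hXdef
  set C : Matrix (Fin mz) (Fin mz) ℝ := 1 - X * Wz⁻¹ with hCdef
  have key : C * Wz * Cᵀ = Wz - X := by
    have hCt : Cᵀ = 1 - Wz⁻¹ * X := by
      rw [hCdef, transpose_sub, transpose_one, transpose_mul, hWit, hXdef]
      simp [transpose_mul, hAit, Matrix.mul_assoc]
    rw [hCdef, hCt]
    have h1 : X * Wz⁻¹ * Wz = X := by rw [Matrix.mul_assoc, hWl, Matrix.mul_one]
    have h2 : X * Wz⁻¹ * X = X := by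
      rw [hXdef]
      calc Sz * A⁻¹ * Szᵀ * Wz⁻¹ * (Sz * A⁻¹ * Szᵀ)
          = Sz * A⁻¹ * (Szᵀ * Wz⁻¹ * Sz) * (A⁻¹ * Szᵀ) := by
            simp only [Matrix.mul_assoc]
        _ = Sz * A⁻¹ * A * (A⁻¹ * Szᵀ) := by rw [← hAdef]
        _ = Sz * (A⁻¹ * A) * (A⁻¹ * Szᵀ) := by simp only [Matrix.mul_assoc]
        _ = Sz * (A⁻¹ * Szᵀ) := by rw [hAl, Matrix.mul_one]
        _ = Sz * A⁻¹ * Szᵀ := by rw [Matrix.mul_assoc]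
    calc (1 - X * Wz⁻¹) * Wz * (1 - Wz⁻¹ * X)
        = (Wz - X * Wz⁻¹ * Wz) * (1 - Wz⁻¹ * X) := by
          rw [Matrix.sub_mul, Matrix.one_mul]
      _ = (Wz - X) * (1 - Wz⁻¹ * X) := by rw [h1]
      _ = Wz - Wz * (Wz⁻¹ * X) - (X - X * (Wz⁻¹ * X)) := by
          rw [Matrix.sub_mul, Matrix.mul_sub, Matrix.mul_sub, Matrix.mul_one, Matrix.mul_one]
      _ = Wz - X := by
          rw [← Matrix.mul_assoc, hWr, Matrix.one_mul, ← Matrix.mul_assoc, h2]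
          abel
  have hpsd : (Wz - X).PosSemidef := by
    rw [← key]
    have := hW.posSemidef.mul_mul_conjTranspose_same C
    rwa [conjTranspose_eq_transpose_of_trivial] at this
  have hdiag : ∀ i, X i i ≤ Wz i i := fun i => by
    have := psd_diag_nonneg hpsd i
    simp only [Matrix.sub_apply] at this; linarith
  refine ⟨?_, hdiag⟩
  simp only [trace, diag]
  exact Finset.sum_le_sum fun i _ => hdiag i
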